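/- Let u₁, u₂ : ℝ → ℝ be differentiable functions. On the open set of points (q₁, q₂, p₁, p₂) ∈ ℝ⁴ with u₁(q₁) ≠ u₂(q₂), define H(q,p) = (p₁² + p₂²) / (2 (u₁(q₁) - u₂(q₂))) and f(q,p) = (u₂(q₂) p₁² + u₁(q₁) p₂²) / (2 (u₁(q₁) - u₂(q₂))). Then the Poisson bracket of H and f vanishes: at every point with u₁(q₁) ≠ u₂(q₂), (∂H/∂p₁)(∂f/∂q₁) + (∂H/∂p₂)(∂f/∂q₂) - (∂H/∂q₁)(∂f/∂p₁) - (∂H/∂q₂)(∂f/∂p₂) = 0, where each partial derivative is the derivative of the corresponding one-variable slice. (The kinetic-energy Hamiltonian of a Liouville metric ds² = (u₁ - u₂)(dq₁² + dq₂²) has f as a first integral.) -/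

import Mathlib

/-- The kinetic-energy Hamiltonian of the Liouville metric
`ds² = (u₁(q₁) - u₂(q₂))(dq₁² + dq₂²)`. -/
noncomputable def liouvilleH (u₁ u₂ : ℝ → ℝ) (q₁ q₂ p₁ p₂ : ℝ) : ℝ :=
  (p₁ ^ 2 + p₂ ^ 2) / (2 * (u₁ q₁ - u₂ q₂))

/-- The first integral `f` of the Liouville Hamiltonian. -/
noncomputable def liouvilleF (u₁ u₂ : ℝ → ℝ) (q₁ q₂ p₁ p₂ : ℝ) : ℝ :=
  (u₂ q₂ * p₁ ^ 2 + u₁ q₁ * p₂ ^ 2) / (2 * (u₁ q₁ - u₂ q₂))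

/-- The canonical Poisson bracket of the Liouville Hamiltonian `H` and the function `f`
vanishes wherever `u₁(q₁) ≠ u₂(q₂)`: `f` is a first integral of `H`. -/
theorem liouville_first_integral (u₁ u₂ : ℝ → ℝ)
    (hu₁ : Differentiable ℝ u₁) (hu₂ : Differentiable ℝ u₂)
    (q₁ q₂ p₁ p₂ : ℝ) (hne : u₁ q₁ ≠ u₂ q₂) :
    deriv (fun s => liouvilleH u₁ u₂ q₁ q₂ s p₂) p₁ *
        deriv (fun s => liouvilleF u₁ u₂ s q₂ p₁ p₂) q₁
      + deriv (fun s => liouvilleH u₁ u₂ q₁ q₂ p₁ s) p₂ *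
        deriv (fun s => liouvilleF u₁ u₂ q₁ s p₁ p₂) q₂
      - deriv (fun s => liouvilleH u₁ u₂ s q₂ p₁ p₂) q₁ *
        deriv (fun s => liouvilleF u₁ u₂ q₁ q₂ s p₂) p₁
      - deriv (fun s => liouvilleH u₁ u₂ q₁ s p₁ p₂) q₂ *
        deriv (fun s => liouvilleF u₁ u₂ q₁ q₂ p₁ s) p₂ = 0 := by
  have hD : u₁ q₁ - u₂ q₂ ≠ 0 := sub_ne_zero.mpr hne
  have hD2 : (2 : ℝ) * (u₁ q₁ - u₂ q₂) ≠ 0 := by positivity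
  set a := u₁ q₁ with ha
  set b := u₂ q₂ with hb
  set a' := deriv u₁ q₁ with ha'
  set b' := deriv u₂ q₂ with hb'
  -- ∂H/∂p₁
  have h1 : HasDerivAt (fun s => liouvilleH u₁ u₂ q₁ q₂ s p₂)
      ((2 * p₁ ^ 1) / (2 * (a - b))) p₁ := by
    simpa [liouvilleH, ← ha, ← hb] using (((hasDerivAt_pow 2 p₁).add_const (p₂ ^ 2)).div_const (2 * (a - b)))
  -- ∂H/∂p₂
  have h2 : HasDerivAt (fun s => liouvilleH u₁ u₂ q₁ q₂ p₁ s)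
      ((2 * p₂ ^ 1) / (2 * (a - b))) p₂ := by
    simpa [liouvilleH, ← ha, ← hb] using (((hasDerivAt_pow 2 p₂).const_add (p₁ ^ 2)).div_const (2 * (a - b)))
  -- ∂f/∂p₁
  have h3 : HasDerivAt (fun s => liouvilleF u₁ u₂ q₁ q₂ s p₂)
      ((b * (2 * p₁ ^ 1)) / (2 * (a - b))) p₁ := by
    simpa [liouvilleF, ← ha, ← hb] using ((((hasDerivAt_pow 2 p₁).const_mul b).add_const (a * p₂ ^ 2)).div_const
      (2 * (a - b)))
  -- ∂f/∂p₂
  have h4 : HasDerivAt (fun s => liouvilleF u₁ u₂ q₁ q₂ p₁ s)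
      ((a * (2 * p₂ ^ 1)) / (2 * (a - b))) p₂ := by
    simpa [liouvilleF, ← ha, ← hb] using ((((hasDerivAt_pow 2 p₂).const_mul a).const_add (b * p₁ ^ 2)).div_const
      (2 * (a - b)))
  -- ∂H/∂q₁
  have h5 : HasDerivAt (fun s => liouvilleH u₁ u₂ s q₂ p₁ p₂)
      ((0 * (2 * (a - b)) - (p₁ ^ 2 + p₂ ^ 2) * (2 * a')) / (2 * (a - b)) ^ 2) q₁ := by
    exact (hasDerivAt_const q₁ (p₁ ^ 2 + p₂ ^ 2)).div
      ((((hu₁ q₁).hasDerivAt.sub_const b).const_mul 2)) hD2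
  -- ∂H/∂q₂
  have h6 : HasDerivAt (fun s => liouvilleH u₁ u₂ q₁ s p₁ p₂)
      ((0 * (2 * (a - b)) - (p₁ ^ 2 + p₂ ^ 2) * (2 * (0 - b'))) / (2 * (a - b)) ^ 2) q₂ := by
    exact (hasDerivAt_const q₂ (p₁ ^ 2 + p₂ ^ 2)).div
      ((((hasDerivAt_const q₂ a).sub (hu₂ q₂).hasDerivAt).const_mul 2)) hD2
  -- ∂f/∂q₁
  have h7 : HasDerivAt (fun s => liouvilleF u₁ u₂ s q₂ p₁ p₂)
      (((a' * p₂ ^ 2) * (2 * (a - b)) - (b * p₁ ^ 2 + a * p₂ ^ 2) * (2 * a')) /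
        (2 * (a - b)) ^ 2) q₁ := by
    exact (((hu₁ q₁).hasDerivAt.mul_const (p₂ ^ 2)).const_add (b * p₁ ^ 2)).div
      (((hu₁ q₁).hasDerivAt.sub_const b).const_mul 2) hD2
  -- ∂f/∂q₂
  have h8 : HasDerivAt (fun s => liouvilleF u₁ u₂ q₁ s p₁ p₂)
      (((b' * p₁ ^ 2) * (2 * (a - b)) - (b * p₁ ^ 2 + a * p₂ ^ 2) * (2 * (0 - b'))) /
        (2 * (a - b)) ^ 2) q₂ := by
    exact (((hu₂ q₂).hasDerivAt.mul_const (p₁ ^ 2)).add_const (a * p₂ ^ 2)).div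
      (((hasDerivAt_const q₂ a).sub (hu₂ q₂).hasDerivAt).const_mul 2) hD2
  rw [h1.deriv, h2.deriv, h3.deriv, h4.deriv, h5.deriv, h6.deriv, h7.deriv, h8.deriv]
  field_simp
  ring
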